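/- If k ≥ log₂ N + 4 (and in particular k ≥ 3), then p := (1/(2^k N^{k+1})) Σ_{x ∈ (ℤ/N)^k} (Σ_{r ∈ ℤ/N} √(η_r^x))^2 satisfies p ≥ 1/8. -/

import Mathlib

open Finset

/-- The subset sum `b · x = ∑ j, b j * x j` over `ℤ/N`. -/
def dotP {N k : ℕ} (b : Fin k → Bool) (x : Fin k → ZMod N) : ZMod N :=
  ∑ j, if b j then x j else 0

/-- `η_r^x`: the number of bit strings `b ∈ {0,1}^k` with `b · x ≡ r (mod N)`. -/
def etaN {N k : ℕ} (r : ZMod N) (x : Fin k → ZMod N) : ℕ :=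
  (Finset.univ.filter fun b : Fin k → Bool => dotP b x = r).card

section aux
variable {N k : ℕ} [NeZero N]

lemma sum_etaN (x : Fin k → ZMod N) : ∑ r : ZMod N, etaN r x = 2 ^ k := by
  have := Finset.card_eq_sum_card_fiberwise
    (f := fun b : Fin k → Bool => dotP b x) (s := univ) (t := univ) (fun b _ => mem_univ _)
  simp only [etaN]
  rw [← this]
  simp [Fintype.card_fun]

lemma fiber_card {b b' : Fin k → Bool} (hne : b ≠ b') :
    (univ.filter fun x : Fin k → ZMod N => dotP b x = dotP b' x).card = N ^ (k - 1) := by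
  classical
  set ε : Fin k → ZMod N := fun j => (if b j then (1 : ZMod N) else 0) - (if b' j then 1 else 0)
    with hε
  let φ : (Fin k → ZMod N) →+ ZMod N :=
    { toFun := fun x => ∑ j, ε j * x j
      map_zero' := by simp
      map_add' := by intro x y; simp [mul_add, Finset.sum_add_distrib] }
  have hφ : ∀ x : Fin k → ZMod N, φ x = dotP b x - dotP b' x := by
    intro x
    show ∑ j, ε j * x j = _
    rw [dotP, dotP, ← Finset.sum_sub_distrib]
    refine Finset.sum_congr rfl fun j _ => ?_
    by_cases h1 : b j <;> by_cases h2 : b' j <;> simp [hε, h1, h2]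
  obtain ⟨j0, hj0⟩ := Function.ne_iff.mp hne
  have hu : ε j0 = 1 ∨ ε j0 = -1 := by
    rcases Bool.dichotomy (b j0) with h1 | h1 <;> rcases Bool.dichotomy (b' j0) with h2 | h2 <;>
      simp [hε, h1, h2] at hj0 ⊢
  have hsq : ε j0 * ε j0 = 1 := by rcases hu with h | h <;> rw [h] <;> ring
  have hsurj : Function.Surjective φ := by
    intro c
    refine ⟨Pi.single j0 (ε j0 * c), ?_⟩
    have hφc : φ (Pi.single j0 (ε j0 * c))
        = ∑ j, ε j * (Pi.single j0 (ε j0 * c) : Fin k → ZMod N) j := rfl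
    rw [hφc, Finset.sum_eq_single j0]
    · rw [Pi.single_eq_same, ← mul_assoc, hsq, one_mul]
    · intro j _ hj; rw [Pi.single_eq_of_ne hj, mul_zero]
    · simp
  have hcard : Nat.card (Fin k → ZMod N) = Nat.card (ZMod N) * Nat.card (φ.ker) := by
    rw [AddSubgroup.card_eq_card_quotient_mul_card_addSubgroup φ.ker]
    congr 1
    exact Nat.card_congr (QuotientAddGroup.quotientKerEquivOfSurjective φ hsurj).toEquiv
  have hNk : Nat.card (Fin k → ZMod N) = N ^ k := by
    simp [Nat.card_eq_fintype_card, Fintype.card_fun, ZMod.card]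
  have hker : Nat.card (φ.ker) = N ^ (k - 1) := by
    have hk1 : 1 ≤ k := Nat.one_le_iff_ne_zero.mpr (by
      rintro rfl; exact hne (funext fun j => absurd j.2 (by omega)))
    have h1 : N ^ k = N * Nat.card (φ.ker) := by
      rw [← hNk, hcard, Nat.card_zmod]
    have hpow : N ^ k = N * N ^ (k - 1) := by
      rw [← pow_succ']; congr 1; omega
    have hN0 : N ≠ 0 := NeZero.ne N
    exact (Nat.eq_of_mul_eq_mul_left (Nat.pos_of_ne_zero hN0) (by omega)).symm
  calc (univ.filter fun x : Fin k → ZMod N => dotP b x = dotP b' x).card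
      = (univ.filter fun x : Fin k → ZMod N => φ x = 0).card := by
        congr 1; ext x; simp [hφ, sub_eq_zero]
    _ = Fintype.card {x : Fin k → ZMod N // φ x = 0} := (Fintype.card_subtype _).symm
    _ = Nat.card {x : Fin k → ZMod N // φ x = 0} := (Nat.card_eq_fintype_card).symm
    _ = Nat.card φ.ker := Nat.card_congr (Equiv.subtypeEquivRight fun x =>
        Iff.symm AddMonoidHom.mem_ker)
    _ = N ^ (k - 1) := hker

lemma sum_sq_etaN_le :
    ∑ x : Fin k → ZMod N, ∑ r : ZMod N, (etaN r x) ^ 2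
      ≤ 2 ^ k * N ^ k + 2 ^ (2 * k) * N ^ (k - 1) := by
  classical
  have keyA : ∀ x : Fin k → ZMod N, ∑ r : ZMod N, (etaN r x) ^ 2
      = ∑ b : Fin k → Bool, ∑ b' : Fin k → Bool,
          if dotP b x = dotP b' x then (1 : ℕ) else 0 := by
    intro x
    have h1 : ∀ r : ZMod N, (etaN r x) ^ 2 = ∑ b : Fin k → Bool, ∑ b' : Fin k → Bool,
        if dotP b x = r ∧ dotP b' x = r then (1 : ℕ) else 0 := by
      intro r
      rw [etaN, sq, Finset.card_filter, Finset.sum_mul_sum]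
      refine Finset.sum_congr rfl fun b _ => Finset.sum_congr rfl fun b' _ => ?_
      by_cases hb : dotP b x = r <;> by_cases hb' : dotP b' x = r <;> simp [hb, hb']
    simp only [h1]
    rw [Finset.sum_comm]
    refine Finset.sum_congr rfl fun b _ => ?_
    rw [Finset.sum_comm]
    refine Finset.sum_congr rfl fun b' _ => ?_
    by_cases h : dotP b x = dotP b' x
    · rw [if_pos h, Finset.sum_eq_single (dotP b x)]
      · simp [← h]
      · intro r _ hr
        exact if_neg (by rintro ⟨h1', -⟩; exact hr h1'.symm)
      · simp
    · rw [if_neg h]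
      refine Finset.sum_eq_zero fun r _ => ?_
      exact if_neg (by rintro ⟨h1', h2'⟩; exact h (h1'.trans h2'.symm))
  have hbound : ∀ b b' : Fin k → Bool,
      (univ.filter fun x : Fin k → ZMod N => dotP b x = dotP b' x).card
        ≤ (if b = b' then N ^ k else 0) + N ^ (k - 1) := by
    intro b b'
    by_cases hbb : b = b'
    · subst hbb
      rw [if_pos rfl, Finset.filter_true_of_mem fun x _ => rfl, Finset.card_univ]
      simp [Fintype.card_fun, ZMod.card]
    · rw [fiber_card hbb, if_neg hbb, zero_add]
  calc ∑ x : Fin k → ZMod N, ∑ r : ZMod N, (etaN r x) ^ 2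
      = ∑ x : Fin k → ZMod N, ∑ b : Fin k → Bool, ∑ b' : Fin k → Bool,
          if dotP b x = dotP b' x then (1 : ℕ) else 0 := Finset.sum_congr rfl fun x _ => keyA x
    _ = ∑ b : Fin k → Bool, ∑ b' : Fin k → Bool,
          (univ.filter fun x : Fin k → ZMod N => dotP b x = dotP b' x).card := by
        rw [Finset.sum_comm]
        refine Finset.sum_congr rfl fun b _ => ?_
        rw [Finset.sum_comm]
        exact Finset.sum_congr rfl fun b' _ => (Finset.card_filter _ _).symm
    _ ≤ ∑ b : Fin k → Bool, ∑ b' : Fin k → Bool,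
          ((if b = b' then N ^ k else 0) + N ^ (k - 1)) :=
        Finset.sum_le_sum fun b _ => Finset.sum_le_sum fun b' _ => hbound b b'
    _ = 2 ^ k * N ^ k + 2 ^ (2 * k) * N ^ (k - 1) := by
        simp only [Finset.sum_add_distrib, Finset.sum_ite_eq, Finset.mem_univ, if_pos,
          Finset.sum_const, Finset.card_univ, smul_eq_mul, Fintype.card_fun,
          Fintype.card_fin, Fintype.card_bool]
        rw [two_mul, pow_add]
        ring

end aux

/-- If `k ≥ log₂ N + 4` (i.e. `2^k ≥ 16 N`, and in particular `k ≥ 3`), then the success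
probability `p` of the pretty good measurement is at least `1/8`. -/
theorem success_prob_lower_bound {N k : ℕ} [NeZero N] (hk : 16 * N ≤ 2 ^ k) (hk3 : 3 ≤ k) :
    (1 / 8 : ℝ) ≤ (1 / ((2 : ℝ) ^ k * (N : ℝ) ^ (k + 1))) *
      ∑ x : Fin k → ZMod N, (∑ r : ZMod N, Real.sqrt (etaN r x)) ^ 2 := by
  classical
  have hN0 : (0 : ℝ) < (N : ℝ) := by
    exact_mod_cast Nat.pos_of_ne_zero (NeZero.ne N)
  set a : (Fin k → ZMod N) → ZMod N → ℝ := fun x r => (etaN r x : ℝ) with ha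
  set T : (Fin k → ZMod N) → ℝ := fun x => ∑ r : ZMod N, Real.sqrt (a x r) with hT
  set Q : (Fin k → ZMod N) → ℝ := fun x => ∑ r : ZMod N, (a x r) ^ 2 with hQ
  have hanon : ∀ x r, 0 ≤ a x r := fun x r => Nat.cast_nonneg _
  have hsumA : ∀ x, ∑ r : ZMod N, a x r = (2 : ℝ) ^ k := by
    intro x
    rw [ha]
    beta_reduce
    exact_mod_cast congrArg (Nat.cast : ℕ → ℝ) (sum_etaN x)
  have hQpos : ∀ x, 0 < Q x := by
    intro x
    rcases lt_or_eq_of_le (Finset.sum_nonneg fun r _ => sq_nonneg (a x r)) with h | h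
    · exact h
    · exfalso
      have h0 : ∀ r ∈ (univ : Finset (ZMod N)), (a x r) ^ 2 = 0 :=
        (Finset.sum_eq_zero_iff_of_nonneg fun r _ => sq_nonneg (a x r)).mp h.symm
      have : ∑ r : ZMod N, a x r = 0 :=
        Finset.sum_eq_zero fun r hr => sq_eq_zero_iff.mp (h0 r hr)
      rw [hsumA x] at this
      exact absurd this (by positivity)
  -- per-x Hölder: (2^k)^3 ≤ (T x)^2 * Q x
  have hkey : ∀ x, (2 : ℝ) ^ (3 * k) ≤ T x ^ 2 * Q x := by
    intro x
    set B : ℝ := ∑ r : ZMod N, a x r * Real.sqrt (a x r) with hB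
    have hCS1 : ((2 : ℝ) ^ k) ^ 2 ≤ T x * B := by
      have := Finset.sum_mul_sq_le_sq_mul_sq (univ : Finset (ZMod N))
        (fun r => Real.sqrt (Real.sqrt (a x r)))
        (fun r => Real.sqrt (a x r) * Real.sqrt (Real.sqrt (a x r)))
      have e1 : ∀ r : ZMod N, Real.sqrt (Real.sqrt (a x r)) *
          (Real.sqrt (a x r) * Real.sqrt (Real.sqrt (a x r))) = a x r := by
        intro r
        have h1 : Real.sqrt (Real.sqrt (a x r)) * Real.sqrt (Real.sqrt (a x r))
            = Real.sqrt (a x r) := Real.mul_self_sqrt (Real.sqrt_nonneg _)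
        have h2 : Real.sqrt (a x r) * Real.sqrt (a x r) = a x r :=
          Real.mul_self_sqrt (hanon x r)
        calc Real.sqrt (Real.sqrt (a x r)) * (Real.sqrt (a x r) * Real.sqrt (Real.sqrt (a x r)))
            = Real.sqrt (a x r) * (Real.sqrt (Real.sqrt (a x r)) * Real.sqrt (Real.sqrt (a x r)))
              := by ring
          _ = Real.sqrt (a x r) * Real.sqrt (a x r) := by rw [h1]
          _ = a x r := h2
      have e2 : ∀ r : ZMod N, (Real.sqrt (Real.sqrt (a x r))) ^ 2 = Real.sqrt (a x r) :=
        fun r => Real.sq_sqrt (Real.sqrt_nonneg _)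
      have e3 : ∀ r : ZMod N, (Real.sqrt (a x r) * Real.sqrt (Real.sqrt (a x r))) ^ 2
          = a x r * Real.sqrt (a x r) := by
        intro r
        rw [mul_pow, Real.sq_sqrt (hanon x r), Real.sq_sqrt (Real.sqrt_nonneg _)]
      simp only [e1, e2, e3] at this
      rw [hsumA x] at this
      exact this
    have hCS2 : B ^ 2 ≤ (2 : ℝ) ^ k * Q x := by
      have := Finset.sum_mul_sq_le_sq_mul_sq (univ : Finset (ZMod N))
        (fun r => Real.sqrt (a x r)) (fun r => a x r)
      have e1 : ∀ r : ZMod N, Real.sqrt (a x r) * a x r = a x r * Real.sqrt (a x r) :=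
        fun r => mul_comm _ _
      have e2 : ∀ r : ZMod N, (Real.sqrt (a x r)) ^ 2 = a x r :=
        fun r => Real.sq_sqrt (hanon x r)
      simp only [e1, e2] at this
      rw [hsumA x] at this
      exact this
    have hTnon : 0 ≤ T x := Finset.sum_nonneg fun r _ => Real.sqrt_nonneg _
    have hBnon : 0 ≤ B := Finset.sum_nonneg fun r _ =>
      mul_nonneg (hanon x r) (Real.sqrt_nonneg _)
    have hSpos : (0 : ℝ) < 2 ^ k := by positivity
    have h3k : (2 : ℝ) ^ (3 * k) = ((2 : ℝ) ^ k) ^ 3 := by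
      rw [mul_comm, pow_mul]
    rw [h3k]
    nlinarith [mul_le_mul hCS1 hCS1 (sq_nonneg ((2:ℝ)^k)) (mul_nonneg hTnon hBnon),
      mul_le_mul_of_nonneg_left hCS2 (sq_nonneg (T x)), sq_nonneg (T x), (hQpos x).le,
      mul_pos hSpos (hQpos x)]
  -- Sedrakyan / Cauchy-Schwarz over x
  set QT : ℝ := ∑ x : Fin k → ZMod N, Q x with hQT
  have hQTpos : 0 < QT := Finset.sum_pos (fun x _ => hQpos x) univ_nonempty
  have sed := Finset.sq_sum_div_le_sum_sq_div (univ : Finset (Fin k → ZMod N))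
    (fun _ => Real.sqrt ((2 : ℝ) ^ (3 * k))) (fun x _ => hQpos x)
  have hcardX : (Finset.univ : Finset (Fin k → ZMod N)).card = N ^ k := by
    simp [Fintype.card_fun, ZMod.card]
  rw [Finset.sum_const, hcardX] at sed
  have hsq3k : (Real.sqrt ((2:ℝ) ^ (3 * k))) ^ 2 = (2:ℝ) ^ (3 * k) :=
    Real.sq_sqrt (by positivity)
  simp only [nsmul_eq_mul, hsq3k] at sed
  have hlhs : ((N ^ k : ℕ) * Real.sqrt ((2:ℝ) ^ (3 * k))) ^ 2
      = ((N : ℝ) ^ k) ^ 2 * (2:ℝ) ^ (3 * k) := by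
    rw [mul_pow, Real.sq_sqrt (by positivity : (0:ℝ) ≤ (2:ℝ) ^ (3 * k))]
    push_cast
    ring
  rw [hlhs] at sed
  -- sed : (N^k)^2 * 2^(3k) / QT ≤ ∑ x, 2^(3k) / Q x
  have hA : ((N : ℝ) ^ k) ^ 2 * (2:ℝ) ^ (3 * k) / QT
      ≤ ∑ x : Fin k → ZMod N, T x ^ 2 := by
    refine le_trans sed (Finset.sum_le_sum fun x _ => ?_)
    rw [div_le_iff₀ (hQpos x)]
    exact hkey x
  -- bound QT from above
  have hQTle : QT ≤ (2:ℝ) ^ k * (N:ℝ) ^ k + (2:ℝ) ^ (2 * k) * (N:ℝ) ^ (k - 1) := by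
    have := sum_sq_etaN_le (N := N) (k := k)
    have hcast : QT = ((∑ x : Fin k → ZMod N, ∑ r : ZMod N, (etaN r x) ^ 2 : ℕ) : ℝ) := by
      rw [hQT]; push_cast; rfl
    rw [hcast]
    exact_mod_cast this
  -- final arithmetic
  have hpos : (0 : ℝ) < (2 : ℝ) ^ k * (N : ℝ) ^ (k + 1) := by positivity
  have hNle : (N : ℝ) ≤ (2:ℝ) ^ k := by
    have h1 : (N : ℕ) ≤ 2 ^ k := le_trans (by omega) hk
    exact_mod_cast h1
  set QB : ℝ := (2:ℝ) ^ k * (N:ℝ) ^ k + (2:ℝ) ^ (2 * k) * (N:ℝ) ^ (k - 1) with hQB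
  have hQBpos : 0 < QB := lt_of_lt_of_le hQTpos hQTle
  have hA2 : ((N : ℝ) ^ k) ^ 2 * (2:ℝ) ^ (3 * k) / QB
      ≤ ∑ x : Fin k → ZMod N, T x ^ 2 := by
    refine le_trans ?_ hA
    gcongr
  have harith : (2:ℝ) ^ k * (N:ℝ) ^ (k + 1) * QB
      ≤ 8 * (((N : ℝ) ^ k) ^ 2 * (2:ℝ) ^ (3 * k)) := by
    have hm : (N:ℝ) ^ (k - 1) * (N:ℝ) = (N:ℝ) ^ k := by
      rw [← pow_succ]; congr 1; omega
    have hv : (N:ℝ) ^ (k + 1) = (N:ℝ) ^ k * (N:ℝ) := by rw [pow_succ]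
    have h2 : (2:ℝ) ^ (2 * k) = (2:ℝ) ^ k * (2:ℝ) ^ k := by rw [two_mul, pow_add]
    have h3 : (2:ℝ) ^ (3 * k) = (2:ℝ) ^ k * (2:ℝ) ^ k * (2:ℝ) ^ k := by
      rw [show 3 * k = k + k + k by ring, pow_add, pow_add]
    have hc : (0:ℝ) ≤ (2:ℝ) ^ k := by positivity
    have hP : (0:ℝ) ≤ (N:ℝ) ^ k := by positivity
    have hM : (0:ℝ) ≤ (N:ℝ) ^ (k - 1) := by positivity
    rw [hQB, hv, h2, h3]
    nlinarith [mul_nonneg (mul_nonneg (mul_nonneg (mul_nonneg hc hc) hP) hP)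
        (sub_nonneg.mpr hNle), hm, mul_nonneg (mul_nonneg hc hc) (mul_nonneg hc hP)]
  -- conclude
  have step : (2:ℝ) ^ k * (N:ℝ) ^ (k + 1) / 8
      ≤ ((N : ℝ) ^ k) ^ 2 * (2:ℝ) ^ (3 * k) / QB := by
    rw [div_le_div_iff₀ (by norm_num) hQBpos]
    linarith
  have hfinal : (2:ℝ) ^ k * (N:ℝ) ^ (k + 1) / 8
      ≤ ∑ x : Fin k → ZMod N, (∑ r : ZMod N, Real.sqrt (etaN r x)) ^ 2 :=
    le_trans step hA2
  calc (1 / 8 : ℝ)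
      = (1 / ((2:ℝ) ^ k * (N:ℝ) ^ (k + 1))) * ((2:ℝ) ^ k * (N:ℝ) ^ (k + 1) / 8) := by
        field_simp
    _ ≤ _ := by
        apply mul_le_mul_of_nonneg_left hfinal
        positivity
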